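/- On a Boolean locale, sheaf conditions combine: a presheaf valued in a category with limits satisfying (a) F(⊥) terminal and (b) F(V ⊔ V') → F(V) × F(V') an isomorphism for all disjoint V, V', automatically satisfies the binary gluing condition: for arbitrary V, V', the square F(V ⊔ V') → F(V), F(V') → F(V ⊓ V') is a pullback. -/

import Mathlib

open CategoryTheory CategoryTheory.Limits Opposite

/-- On a Boolean algebra, a presheaf valued in a category with finite limits whose
value at `⊥` is terminal and which sends disjoint binary joins to products
automatically satisfies the binary gluing condition: every square
`F(V ⊔ V') → F(V), F(V') → F(V ⊓ V')` is a pullback. -/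
theorem boolean_presheaf_gluing {B : Type*} [BooleanAlgebra B]
    {C : Type*} [Category C] [HasFiniteLimits C]
    (F : Bᵒᵖ ⥤ C)
    (hbot : Nonempty (IsTerminal (F.obj (op (⊥ : B)))))
    (hdisj : ∀ V V' : B, V ⊓ V' = ⊥ →
      IsIso (prod.lift (F.map (homOfLE (le_sup_left : V ≤ V ⊔ V')).op)
                       (F.map (homOfLE (le_sup_right : V' ≤ V ⊔ V')).op))) :
    ∀ V V' : B,
      IsPullback
        (F.map (homOfLE (le_sup_left : V ≤ V ⊔ V')).op)
        (F.map (homOfLE (le_sup_right : V' ≤ V ⊔ V')).op)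
        (F.map (homOfLE (inf_le_left : V ⊓ V' ≤ V)).op)
        (F.map (homOfLE (inf_le_right : V ⊓ V' ≤ V')).op) := by
  obtain ⟨t⟩ := hbot
  -- any two maps of the form `F.map _` between the same objects agree
  have hmap : ∀ {a b : B} (f g : (op b : Bᵒᵖ) ⟶ op a),
      F.map f = F.map g := fun f g => congrArg F.map (Subsingleton.elim f g)
  have hcomp : ∀ {a b c : B} (h1 : a ≤ b) (h2 : b ≤ c),
      F.map (homOfLE h2).op ≫ F.map (homOfLE h1).op
        = F.map (homOfLE (h1.trans h2)).op := by
    intro a b c h1 h2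
    rw [← F.map_comp]
    exact hmap _ _
  -- the key auxiliary pullback: disjoint covers give pullbacks over `F ⊥`
  have hpb : ∀ (U W X : B) (hW : W ≤ U) (hX : X ≤ U), U = W ⊔ X → W ⊓ X = ⊥ →
      IsPullback (F.map (homOfLE hW).op) (F.map (homOfLE hX).op)
        (F.map (homOfLE (bot_le : (⊥ : B) ≤ W)).op)
        (F.map (homOfLE (bot_le : (⊥ : B) ≤ X)).op) := by
    intro U W X hW hX hU hd
    subst hU
    have hiso := hdisj W X hd
    have hl : IsLimit (BinaryFan.mk
        (F.map (homOfLE (le_sup_left : W ≤ W ⊔ X)).op)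
        (F.map (homOfLE (le_sup_right : X ≤ W ⊔ X)).op)) := by
      refine IsLimit.ofIsoLimit (prodIsProd (F.obj (op W)) (F.obj (op X)))
        (Cones.ext (asIso (prod.lift
          (F.map (homOfLE (le_sup_left : W ≤ W ⊔ X)).op)
          (F.map (homOfLE (le_sup_right : X ≤ W ⊔ X)).op))).symm ?_)
      rintro ⟨⟨⟩⟩ <;> simp <;> simp [prod.lift_fst, prod.lift_snd]
    have pb := IsPullback.of_is_product' hl t
    have e1 : t.from (F.obj (op W)) = F.map (homOfLE (bot_le : (⊥ : B) ≤ W)).op :=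
      t.hom_ext _ _
    have e2 : t.from (F.obj (op X)) = F.map (homOfLE (bot_le : (⊥ : B) ≤ X)).op :=
      t.hom_ext _ _
    rw [e1, e2] at pb
    convert pb using 2
  intro V V'
  -- decompose: V ⊔ V' = (V \ V') ⊔ V', and V = (V \ V') ⊔ (V ⊓ V'), disjointly
  have hW : V \ V' ≤ V ⊔ V' := sdiff_le.trans le_sup_left
  have hWV : V \ V' ≤ V := sdiff_le
  -- outer square: over U = V ⊔ V' = (V \ V') ⊔ V'
  have houter := hpb (V ⊔ V') (V \ V') V' hW le_sup_right
    (by rw [sdiff_sup_self]) (by rw [inf_comm]; exact inf_sdiff_self_right)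
  -- right square: over V = (V \ V') ⊔ (V ⊓ V')
  have hright := hpb V (V \ V') (V ⊓ V') hWV inf_le_left
    (by rw [sup_comm, sup_inf_sdiff]) (inf_sdiff_inf V V')
  -- rewrite the outer square's legs as composites
  rw [← hcomp hWV (le_sup_left : V ≤ V ⊔ V'),
      ← hcomp (bot_le : (⊥ : B) ≤ V ⊓ V') (inf_le_right : V ⊓ V' ≤ V')] at houter
  exact IsPullback.of_right houter
    (by rw [hcomp, hcomp]) hright
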